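/- Let A be an n × n complex matrix and V an n × n unitary matrix. Then |Tr(A V)| ≤ √(rank A) · ‖A‖_F, where ‖A‖_F = √(∑_{i,j} |A_{ij}|²) is the Frobenius norm of A. -/

import Mathlib

open Matrix

open ComplexOrder in
private lemma rank_conjT_mul_self_aux (n : ℕ) (A : Matrix (Fin n) (Fin n) ℂ) :
    (Aᴴ * A).rank = A.rank :=
  Matrix.rank_conjTranspose_mul_self A

private lemma star_mul_self_eq_normSq (z : ℂ) :
    star z * z = (Complex.normSq z : ℂ) := by
  rw [Complex.star_def, mul_comm, Complex.mul_conj]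

/-- For an `n × n` complex matrix `A` and a unitary `V`,
`|Tr(A V)| ≤ √(rank A) · ‖A‖_F`, where `‖A‖_F = √(∑ |A i j|²)`. -/
theorem trace_mul_unitary_le (n : ℕ) (A V : Matrix (Fin n) (Fin n) ℂ)
    (hV : Vᴴ * V = 1) :
    ‖(A * V).trace‖ ≤
      Real.sqrt (A.rank) * Real.sqrt (∑ i, ∑ j, ‖A i j‖ ^ 2) := by
  classical
  have hVV : V * Vᴴ = 1 := by
    rwa [mul_eq_one_comm] at hV
  set H : Matrix (Fin n) (Fin n) ℂ := Aᴴ * A with hHdef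
  have hH : H.IsHermitian := isHermitian_conjTranspose_mul_self A
  set U : Matrix (Fin n) (Fin n) ℂ := (hH.eigenvectorUnitary : Matrix (Fin n) (Fin n) ℂ)
    with hUdef
  set μ : Fin n → ℝ := hH.eigenvalues with hμdef
  have hU1 : Uᴴ * U = 1 := by
    simpa [star_eq_conjTranspose] using
      (Matrix.mem_unitaryGroup_iff'.mp (hH.eigenvectorUnitary).2)
  have hU2 : U * Uᴴ = 1 := by
    rwa [mul_eq_one_comm] at hU1
  set D : Matrix (Fin n) (Fin n) ℂ :=
    Matrix.diagonal (fun i => if μ i = 0 then 0 else 1) with hDdef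
  set Q : Matrix (Fin n) (Fin n) ℂ := U * D * Uᴴ with hQdef
  -- spectral theorem
  have hspec : H = U * Matrix.diagonal (Complex.ofReal ∘ μ) * Uᴴ := hH.spectral_theorem
  have hHU : H * U = U * Matrix.diagonal (Complex.ofReal ∘ μ) := by
    rw [hspec, Matrix.mul_assoc, Matrix.mul_assoc, hU1, Matrix.mul_one]
  -- columns of A * U with zero eigenvalue vanish
  have hcol : ∀ j, μ j = 0 → ∀ i, (A * U) i j = 0 := by
    intro j hj
    set x : Fin n → ℂ := fun k => U k j with hxdef
    have hHx : H *ᵥ x = 0 := by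
      funext i
      have h1 : (H * U) i j = (U * Matrix.diagonal (Complex.ofReal ∘ μ)) i j := by rw [hHU]
      have h2 : (H *ᵥ x) i = (H * U) i j := by
        simp [Matrix.mulVec, Matrix.mul_apply, dotProduct, hxdef]
      rw [h2, h1, Matrix.mul_diagonal]
      simp [hj]
    have hAx : ∀ i, (A *ᵥ x) i = 0 := by
      have hdp : star (A *ᵥ x) ⬝ᵥ (A *ᵥ x) = 0 := by
        have h3 : star (A *ᵥ x) ⬝ᵥ (A *ᵥ x) = star x ⬝ᵥ (H *ᵥ x) := by
          rw [Matrix.star_mulVec, hHdef, ← Matrix.mulVec_mulVec,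
            Matrix.dotProduct_mulVec (star x) Aᴴ (A *ᵥ x)]
        rw [h3, hHx, dotProduct_zero]
      have hsumC : (↑(∑ i, Complex.normSq ((A *ᵥ x) i)) : ℂ) = 0 := by
        rw [Complex.ofReal_sum, ← hdp]
        rw [dotProduct]
        exact Finset.sum_congr rfl fun i _ => (star_mul_self_eq_normSq _).symm
      have hsum : ∑ i, Complex.normSq ((A *ᵥ x) i) = 0 := by exact_mod_cast hsumC
      intro i
      have hnn : ∀ i ∈ Finset.univ, (0:ℝ) ≤ Complex.normSq ((A *ᵥ x) i) := fun i _ =>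
        Complex.normSq_nonneg _
      have := (Finset.sum_eq_zero_iff_of_nonneg hnn).mp hsum i (Finset.mem_univ i)
      exact Complex.normSq_eq_zero.mp this
    intro i
    have h4 : (A * U) i j = (A *ᵥ x) i := by
      simp [Matrix.mulVec, Matrix.mul_apply, dotProduct, hxdef]
    rw [h4, hAx]
  -- A * Q = A
  have hAUD : A * U * D = A * U := by
    ext i j
    rw [hDdef, Matrix.mul_diagonal]
    by_cases hj : μ j = 0
    · simp [hj, hcol j hj i]
    · simp [hj]
  have hAQ : A * Q = A := by
    rw [hQdef, ← Matrix.mul_assoc, ← Matrix.mul_assoc, hAUD, Matrix.mul_assoc, hU2,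
      Matrix.mul_one]
  -- Q * Qᴴ = Q
  have hDH : Dᴴ = D := by
    ext i j
    rw [hDdef, Matrix.conjTranspose_apply, Matrix.diagonal_apply, Matrix.diagonal_apply]
    by_cases h : j = i
    · subst h; simp only [if_pos rfl]
      by_cases h2 : μ j = 0 <;> simp [h2]
    · simp [h, Ne.symm h]
  have hDD : D * D = D := by
    ext i j
    rw [hDdef, Matrix.diagonal_mul_diagonal, Matrix.diagonal_apply, Matrix.diagonal_apply]
    by_cases hij : i = j
    · subst hij
      simp only [if_pos rfl, Pi.mul_apply]
      by_cases h : μ i = 0 <;> simp [h]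
    · simp [hij]
  have hQQ : Q * Qᴴ = Q := by
    rw [hQdef]
    simp only [Matrix.conjTranspose_mul, Matrix.conjTranspose_conjTranspose, hDH]
    calc U * D * Uᴴ * (U * (D * Uᴴ)) = U * D * (Uᴴ * U) * (D * Uᴴ) := by
          simp only [Matrix.mul_assoc]
      _ = U * D * (D * Uᴴ) := by rw [hU1, Matrix.mul_one]
      _ = U * (D * D) * Uᴴ := by simp only [Matrix.mul_assoc]
      _ = U * D * Uᴴ := by rw [hDD]
  -- trace of Q is the rank of A
  have htrQ : Q.trace = (A.rank : ℂ) := by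
    have h1 : Q.trace = D.trace := by
      rw [hQdef, Matrix.trace_mul_cycle, hU1, Matrix.one_mul]
    have h2 : D.trace = (Fintype.card {i // μ i ≠ 0} : ℂ) := by
      rw [hDdef, Matrix.trace_diagonal, Fintype.card_subtype, Finset.card_eq_sum_ones]
      push_cast
      rw [Finset.sum_filter]
      exact Finset.sum_congr rfl fun i _ => by by_cases h : μ i = 0 <;> simp [h]
    have h3 : A.rank = Fintype.card {i // μ i ≠ 0} := by
      rw [← rank_conjT_mul_self_aux n A, ← hHdef, hH.rank_eq_card_non_zero_eigs]
    rw [h1, h2, h3]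
  -- Frobenius norm squared of Q * V equals rank A
  have hQVnorm : ∑ i, ∑ j, ‖(Q * V) i j‖ ^ 2 = (A.rank : ℝ) := by
    have htr : ((Q * V) * (Q * V)ᴴ).trace = (A.rank : ℂ) := by
      have h5 : (Q * V) * (Q * V)ᴴ = Q * Qᴴ := by
        rw [Matrix.conjTranspose_mul]
        calc Q * V * (Vᴴ * Qᴴ) = Q * (V * Vᴴ) * Qᴴ := by simp only [Matrix.mul_assoc]
          _ = Q * Qᴴ := by rw [hVV, Matrix.mul_one]
      rw [h5, hQQ, htrQ]
    have hentry : ((Q * V) * (Q * V)ᴴ).trace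
        = ((∑ i, ∑ j, ‖(Q * V) i j‖ ^ 2 : ℝ) : ℂ) := by
      rw [Matrix.trace]
      push_cast
      refine Finset.sum_congr rfl fun i _ => ?_
      rw [Matrix.diag_apply, Matrix.mul_apply]
      refine Finset.sum_congr rfl fun j _ => ?_
      rw [Matrix.conjTranspose_apply, mul_comm, star_mul_self_eq_normSq]
      norm_cast
      exact (Complex.sq_norm _).symm
    have h6 := hentry ▸ htr
    exact_mod_cast h6
  -- rewrite the trace as a sum over pairs
  have htrace_eq : (A * V).trace = ∑ p : Fin n × Fin n, A p.1 p.2 * (Q * V) p.2 p.1 := by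
    have h7 : A * V = A * (Q * V) := by rw [← Matrix.mul_assoc, hAQ]
    rw [h7, Matrix.trace, Fintype.sum_prod_type]
    exact Finset.sum_congr rfl fun i _ => by rw [Matrix.diag_apply, Matrix.mul_apply]
  -- Cauchy–Schwarz
  calc ‖(A * V).trace‖
      ≤ ∑ p : Fin n × Fin n, ‖A p.1 p.2‖ * ‖(Q * V) p.2 p.1‖ := by
        rw [htrace_eq]
        refine (norm_sum_le _ _).trans (le_of_eq ?_)
        exact Finset.sum_congr rfl fun p _ => norm_mul _ _
    _ ≤ Real.sqrt (∑ p : Fin n × Fin n, ‖A p.1 p.2‖ ^ 2) *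
          Real.sqrt (∑ p : Fin n × Fin n, ‖(Q * V) p.2 p.1‖ ^ 2) :=
        Real.sum_mul_le_sqrt_mul_sqrt _ _ _
    _ = Real.sqrt (A.rank) * Real.sqrt (∑ i, ∑ j, ‖A i j‖ ^ 2) := by
        have hswap : ∑ p : Fin n × Fin n, ‖(Q * V) p.2 p.1‖ ^ 2
            = ∑ i, ∑ j, ‖(Q * V) i j‖ ^ 2 := by
          rw [Fintype.sum_prod_type]
          exact Finset.sum_comm
        have hA' : ∑ p : Fin n × Fin n, ‖A p.1 p.2‖ ^ 2
            = ∑ i, ∑ j, ‖A i j‖ ^ 2 := by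
          rw [Fintype.sum_prod_type]
        rw [hA', hswap, hQVnorm, mul_comm]
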